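/- Let k ≥ 1, m ≥ 1 and n ≥ 1 be integers and let C be a linear code of length n over R_{k,m}. Then for every real number z, |C| · Σ_{b ∈ C^⊥} z^{w_L(b)} = Σ_{c ∈ C} (1 - z)^{w_L(c)} · (1 + z)^{kmn - w_L(c)} (MacWilliams identity for Lee weight enumerators over R_{k,m}; equivalently Lee_{C^⊥}(z) = |C|^{-1} (1+z)^{kmn} Lee_C((1-z)/(1+z)) for z ≠ -1). -/

import Mathlib

open MvPolynomial

set_option synthInstance.maxHeartbeats 1000000
set_option maxHeartbeats 1000000

/-- The ring `R_{k,m} = F_2[u,v]/⟨u^k, v^m⟩`. -/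
noncomputable abbrev Rkm (k m : ℕ) : Type :=
  MvPolynomial (Fin 2) (ZMod 2) ⧸
    (Ideal.span {(X 0 : MvPolynomial (Fin 2) (ZMod 2)) ^ k, (X 1 : MvPolynomial (Fin 2) (ZMod 2)) ^ m})

/-- `u`, the image of `X 0` in `R_{k,m}`. -/
noncomputable def Rkm.u (k m : ℕ) : Rkm k m := Ideal.Quotient.mk _ (X 0)

/-- `v`, the image of `X 1` in `R_{k,m}`. -/
noncomputable def Rkm.v (k m : ℕ) : Rkm k m := Ideal.Quotient.mk _ (X 1)

/-- The `t`-th Gray interval (0-indexed): `I_{2s+1} = {s,…,k-1-s}` and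
`I_{2s+2} = {s+1,…,k-1-s}`, i.e. `I_{t+1} = {⌈(t+1)/2⌉,…,k-1-⌊t/2⌋}` for `t = 0,…,k-1`. -/
def grayInterval (k : ℕ) (t : Fin k) : Finset (Fin k) :=
  Finset.univ.filter fun i : Fin k => ((t : ℕ) + 1) / 2 ≤ (i : ℕ) ∧ (i : ℕ) ≤ k - 1 - (t : ℕ) / 2

namespace MacAux

noncomputable def e : ZMod 2 → ℝ := fun s => if s = 0 then 1 else -1

lemma e_zero : e 0 = 1 := rfl

lemma e_add (x y : ZMod 2) : e (x + y) = e x * e y := by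
  have h : ∀ x : ZMod 2, x = 0 ∨ x = 1 := by decide
  rcases h x with rfl | rfl <;> rcases h y with rfl | rfl <;>
    simp [e, show (1 + 1 : ZMod 2) = 0 from by decide]

lemma e_sum {ι : Type*} (s : Finset ι) (g : ι → ZMod 2) :
    e (∑ i ∈ s, g i) = ∏ i ∈ s, e (g i) := by
  induction s using Finset.cons_induction with
  | empty => simp [e_zero]
  | cons a s ha ih => simp [Finset.sum_cons, Finset.prod_cons, e_add, ih]

lemma gray_pair_parity (k : ℕ) (i i' : Fin k) :
    (∑ t : Fin k, if i ∈ grayInterval k t ∧ i' ∈ grayInterval k t then (1 : ZMod 2) else 0)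
      = if (i : ℕ) + (i' : ℕ) < k then 1 else 0 := by
  have hi := i.isLt
  have hi' := i'.isLt
  have hmem : ∀ t j : Fin k, (j ∈ grayInterval k t) =
      (((t:ℕ)+1)/2 ≤ (j:ℕ) ∧ (j:ℕ) ≤ k - 1 - (t:ℕ)/2) := by
    intro t j; simp [grayInterval]
  simp_rw [hmem]
  rw [Fin.sum_univ_eq_sum_range (fun t =>
    if ((t+1)/2 ≤ (i:ℕ) ∧ (i:ℕ) ≤ k - 1 - t/2) ∧ ((t+1)/2 ≤ (i':ℕ) ∧ (i':ℕ) ≤ k - 1 - t/2)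
      then (1 : ZMod 2) else 0)]
  rw [Finset.sum_boole]
  set N : ℕ := min (min (2 * min (i:ℕ) (i':ℕ)) (2 * (k - 1 - max (i:ℕ) (i':ℕ)) + 1) + 1) k with hN
  have hfil : ((Finset.range k).filter fun t =>
      ((t+1)/2 ≤ (i:ℕ) ∧ (i:ℕ) ≤ k - 1 - t/2) ∧ ((t+1)/2 ≤ (i':ℕ) ∧ (i':ℕ) ≤ k - 1 - t/2))
      = Finset.range N := by
    ext t; simp only [Finset.mem_filter, Finset.mem_range, hN]; omega
  rw [hfil, Finset.card_range]
  have hpar : N % 2 = if (i:ℕ) + (i':ℕ) < k then 1 else 0 := by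
    rw [hN]; split <;> omega
  rw [← ZMod.natCast_mod, hpar]
  split <;> simp


lemma u_pow (k m : ℕ) : Rkm.u k m ^ k = 0 := by
  rw [Rkm.u, ← map_pow, Ideal.Quotient.eq_zero_iff_mem]
  exact Ideal.subset_span (by simp)

lemma v_pow (k m : ℕ) : Rkm.v k m ^ m = 0 := by
  rw [Rkm.v, ← map_pow, Ideal.Quotient.eq_zero_iff_mem]
  exact Ideal.subset_span (by simp)

variable {k m : ℕ} (B : Module.Basis (Fin k × Fin m) (ZMod 2) (Rkm k m))

noncomputable def Tl : Rkm k m →ₗ[ZMod 2] ZMod 2 := ∑ p, B.coord p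

lemma Tl_apply (a : Rkm k m) : Tl B a = ∑ p, B.repr a p := by
  simp [Tl, Module.Basis.coord_apply]

def fmat (k m : ℕ) (p : Fin k × Fin m) (q : Fin m × Fin k) : ZMod 2 :=
  if p.2 ∈ grayInterval m q.1 ∧ p.1 ∈ grayInterval k q.2 then 1 else 0

noncomputable def psiq (q : Fin m × Fin k) : Rkm k m →ₗ[ZMod 2] ZMod 2 :=
  ∑ p, fmat k m p q • B.coord p

lemma psiq_apply (q : Fin m × Fin k) (a : Rkm k m) :
    psiq B q a = ∑ p, fmat k m p q * B.repr a p := by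
  simp [psiq, Module.Basis.coord_apply, smul_eq_mul]

lemma psiq_basis (q : Fin m × Fin k) (p : Fin k × Fin m) :
    psiq B q (B p) = fmat k m p q := by
  simp [psiq_apply, Finsupp.single_apply, mul_ite]

lemma Tl_basis_mul (hB : ∀ p : Fin k × Fin m, B p = Rkm.u k m ^ (p.1 : ℕ) * Rkm.v k m ^ (p.2 : ℕ))
    (p p' : Fin k × Fin m) :
    Tl B (B p * B p')
      = if (p.1 : ℕ) + (p'.1 : ℕ) < k ∧ (p.2 : ℕ) + (p'.2 : ℕ) < m then 1 else 0 := by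
  have hprod : B p * B p'
      = Rkm.u k m ^ ((p.1 : ℕ) + (p'.1 : ℕ)) * Rkm.v k m ^ ((p.2 : ℕ) + (p'.2 : ℕ)) := by
    rw [hB p, hB p', mul_mul_mul_comm, ← pow_add, ← pow_add]
  by_cases h : (p.1 : ℕ) + (p'.1 : ℕ) < k ∧ (p.2 : ℕ) + (p'.2 : ℕ) < m
  · obtain ⟨h1, h2⟩ := h
    have : B p * B p' = B (⟨(p.1 : ℕ) + (p'.1 : ℕ), h1⟩, ⟨(p.2 : ℕ) + (p'.2 : ℕ), h2⟩) := by
      rw [hprod, hB]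
    rw [this, Tl_apply]
    simp [Finsupp.single_apply, h1, h2]
  · rw [if_neg h]
    have hz : B p * B p' = 0 := by
      rw [hprod]
      rcases not_and_or.mp h with h1 | h2
      · have hu : Rkm.u k m ^ ((p.1 : ℕ) + (p'.1 : ℕ)) = 0 := by
          have he : (p.1 : ℕ) + (p'.1 : ℕ) = k + ((p.1 : ℕ) + (p'.1 : ℕ) - k) := by omega
          rw [he, pow_add, u_pow, zero_mul]
        rw [hu, zero_mul]
      · have hv : Rkm.v k m ^ ((p.2 : ℕ) + (p'.2 : ℕ)) = 0 := by
          have he : (p.2 : ℕ) + (p'.2 : ℕ) = m + ((p.2 : ℕ) + (p'.2 : ℕ) - m) := by omega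
          rw [he, pow_add, v_pow, zero_mul]
        rw [hv, mul_zero]
    rw [hz, map_zero]

lemma pairing_basis (p p' : Fin k × Fin m) :
    ∑ q : Fin m × Fin k, fmat k m p q * fmat k m p' q
      = if (p.1 : ℕ) + (p'.1 : ℕ) < k ∧ (p.2 : ℕ) + (p'.2 : ℕ) < m then 1 else 0 := by
  calc ∑ q : Fin m × Fin k, fmat k m p q * fmat k m p' q
      = ∑ q1 : Fin m, ∑ q2 : Fin k,
          (if p.2 ∈ grayInterval m q1 ∧ p'.2 ∈ grayInterval m q1 then (1 : ZMod 2) else 0)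
          * (if p.1 ∈ grayInterval k q2 ∧ p'.1 ∈ grayInterval k q2 then 1 else 0) := by
        rw [Fintype.sum_prod_type]
        refine Finset.sum_congr rfl fun q1 _ => Finset.sum_congr rfl fun q2 _ => ?_
        simp only [fmat, ite_zero_mul_ite_zero, one_mul]
        exact if_congr (by tauto) rfl rfl
    _ = (∑ q1 : Fin m, if p.2 ∈ grayInterval m q1 ∧ p'.2 ∈ grayInterval m q1 then (1 : ZMod 2) else 0)
          * (∑ q2 : Fin k, if p.1 ∈ grayInterval k q2 ∧ p'.1 ∈ grayInterval k q2 then 1 else 0) := by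
        rw [Finset.sum_mul_sum]
    _ = (if (p.2 : ℕ) + (p'.2 : ℕ) < m then 1 else 0)
          * (if (p.1 : ℕ) + (p'.1 : ℕ) < k then 1 else 0) := by
        rw [gray_pair_parity, gray_pair_parity]
    _ = if (p.1 : ℕ) + (p'.1 : ℕ) < k ∧ (p.2 : ℕ) + (p'.2 : ℕ) < m then 1 else 0 := by
        rw [ite_zero_mul_ite_zero, one_mul]
        exact if_congr and_comm rfl rfl

lemma pairing (hB : ∀ p : Fin k × Fin m, B p = Rkm.u k m ^ (p.1 : ℕ) * Rkm.v k m ^ (p.2 : ℕ))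
    (a b : Rkm k m) :
    ∑ q : Fin m × Fin k, psiq B q a * psiq B q b = Tl B (a * b) := by
  have key : (∑ q : Fin m × Fin k,
        (LinearMap.mul (ZMod 2) (ZMod 2)).compl₁₂ (psiq B q) (psiq B q))
      = (LinearMap.mul (ZMod 2) (Rkm k m)).compr₂ (Tl B) := by
    apply LinearMap.ext_basis B B
    intro p p'
    simp only [LinearMap.sum_apply, LinearMap.compl₁₂_apply, LinearMap.compr₂_apply,
      LinearMap.mul_apply', psiq_basis]
    rw [pairing_basis, Tl_basis_mul B hB]
  have h2 := LinearMap.congr_fun (LinearMap.congr_fun key a) b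
  simpa only [LinearMap.sum_apply, LinearMap.compl₁₂_apply, LinearMap.compr₂_apply,
    LinearMap.mul_apply'] using h2


lemma nondeg (hB : ∀ p : Fin k × Fin m, B p = Rkm.u k m ^ (p.1 : ℕ) * Rkm.v k m ^ (p.2 : ℕ))
    (hk : 1 ≤ k) (hm : 1 ≤ m) (a : Rkm k m) (ha : a ≠ 0) :
    ∃ b : Rkm k m, Tl B (a * b) ≠ 0 := by
  classical
  set s := (B.repr a).support with hs
  have hsne : s.Nonempty := by
    rw [hs, Finsupp.support_nonempty_iff]
    exact fun h => ha ((LinearEquiv.map_eq_zero_iff B.repr).mp h)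
  have hfs : (s.image Prod.fst).Nonempty := hsne.image _
  set i0 : Fin k := (s.image Prod.fst).min' hfs with hi0
  have hi0mem : i0 ∈ s.image Prod.fst := (s.image Prod.fst).min'_mem hfs
  obtain ⟨p0, hp0s, hp0⟩ := Finset.mem_image.mp hi0mem
  have hssne : ((s.filter fun p => p.1 = i0).image Prod.snd).Nonempty :=
    ⟨p0.2, Finset.mem_image.mpr ⟨p0, Finset.mem_filter.mpr ⟨hp0s, hp0⟩, rfl⟩⟩
  set j0 : Fin m := ((s.filter fun p => p.1 = i0).image Prod.snd).min' hssne with hj0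
  have hj0mem := ((s.filter fun p => p.1 = i0).image Prod.snd).min'_mem hssne
  obtain ⟨p1, hp1s, hp1⟩ := Finset.mem_image.mp hj0mem
  have hp1f := Finset.mem_filter.mp hp1s
  have hkey : ((i0, j0) : Fin k × Fin m) ∈ s := by
    have : p1 = (i0, j0) := Prod.ext hp1f.2 hp1
    exact this ▸ hp1f.1
  have hmin1 : ∀ p ∈ s, i0 ≤ p.1 := by
    intro p hp
    exact (s.image Prod.fst).min'_le _ (Finset.mem_image_of_mem _ hp)
  have hmin2 : ∀ p ∈ s, p.1 = i0 → j0 ≤ p.2 := by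
    intro p hp hp1
    apply Finset.min'_le
    exact Finset.mem_image.mpr ⟨p, Finset.mem_filter.mpr ⟨hp, hp1⟩, rfl⟩
  refine ⟨B (⟨k - 1 - (i0 : ℕ), by omega⟩, ⟨m - 1 - (j0 : ℕ), by omega⟩), ?_⟩
  have hexp : a * B (⟨k - 1 - (i0 : ℕ), by omega⟩, ⟨m - 1 - (j0 : ℕ), by omega⟩)
      = ∑ p, B.repr a p •
        (B p * B (⟨k - 1 - (i0 : ℕ), by omega⟩, ⟨m - 1 - (j0 : ℕ), by omega⟩)) := by
    conv_lhs => arg 1; rw [← B.sum_repr a]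
    rw [Finset.sum_mul]
    exact Finset.sum_congr rfl fun p _ => smul_mul_assoc _ _ _
  rw [hexp, map_sum]
  have hterm : ∀ p : Fin k × Fin m,
      Tl B (B.repr a p •
        (B p * B (⟨k - 1 - (i0 : ℕ), by omega⟩, ⟨m - 1 - (j0 : ℕ), by omega⟩)))
      = if (p.1 : ℕ) ≤ (i0 : ℕ) ∧ (p.2 : ℕ) ≤ (j0 : ℕ) then B.repr a p else 0 := by
    intro p
    rw [map_smul, smul_eq_mul, Tl_basis_mul B hB]
    have hp1 := p.1.isLt
    have hp2 := p.2.isLt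
    have hii := i0.isLt
    have hjj := j0.isLt
    have hc : ((p.1 : ℕ) + (((⟨k - 1 - (i0 : ℕ), by omega⟩ : Fin k)) : ℕ) < k
        ∧ (p.2 : ℕ) + (((⟨m - 1 - (j0 : ℕ), by omega⟩ : Fin m)) : ℕ) < m)
        ↔ ((p.1 : ℕ) ≤ (i0 : ℕ) ∧ (p.2 : ℕ) ≤ (j0 : ℕ)) := by
      simp only [Fin.val_mk]
      omega
    split_ifs with h1 h2 h2
    · exact mul_one _
    · exact absurd (hc.mp h1) h2
    · exact absurd (hc.mpr h2) h1
    · exact mul_zero _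
  rw [Finset.sum_congr rfl fun p _ => hterm p]
  rw [Finset.sum_ite, Finset.sum_const_zero, add_zero]
  have hfilter : (Finset.univ.filter
      fun p : Fin k × Fin m => (p.1 : ℕ) ≤ (i0 : ℕ) ∧ (p.2 : ℕ) ≤ (j0 : ℕ)).sum (B.repr a)
      = B.repr a (i0, j0) := by
    apply Finset.sum_eq_single (i0, j0)
    · intro p hp hne
      by_contra hne0
      have hps : p ∈ s := Finsupp.mem_support_iff.mpr hne0
      have h1 := hmin1 p hps
      rw [Finset.mem_filter] at hp
      have hple : (p.1 : ℕ) ≤ (i0 : ℕ) := hp.2.1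
      have hpe : p.1 = i0 := le_antisymm (by exact_mod_cast hple) h1
      have h2 := hmin2 p hps hpe
      have hpe2 : p.2 = j0 := le_antisymm (by exact_mod_cast hp.2.2) h2
      exact hne (Prod.ext hpe hpe2)
    · intro h
      exact absurd (Finset.mem_filter.mpr ⟨Finset.mem_univ _, le_refl _, le_refl _⟩) h
  rw [hfilter]
  exact Finsupp.mem_support_iff.mp hkey

lemma psi_bij (hB : ∀ p : Fin k × Fin m, B p = Rkm.u k m ^ (p.1 : ℕ) * Rkm.v k m ^ (p.2 : ℕ))
    (hk : 1 ≤ k) (hm : 1 ≤ m) [Fintype (Rkm k m)] :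
    Function.Bijective (fun a : Rkm k m => fun q : Fin m × Fin k => psiq B q a) := by
  rw [Fintype.bijective_iff_injective_and_card]
  constructor
  · intro a b hab
    by_contra hne
    have hd : a - b ≠ 0 := sub_ne_zero.mpr hne
    obtain ⟨c, hc⟩ := nondeg B hB hk hm (a - b) hd
    apply hc
    rw [← pairing B hB]
    have hz : ∀ q, psiq B q (a - b) = 0 := fun q => by
      have h := congrFun hab q
      simp only at h
      rw [map_sub, h, sub_self]
    simp [hz]
  · rw [Module.card_fintype B]
    simp [ZMod.card, Fintype.card_prod, Nat.mul_comm]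


lemma sum_zmod2 (h : ZMod 2 → ℝ) : ∑ s : ZMod 2, h s = h 0 + h 1 := by
  have huniv : (Finset.univ : Finset (ZMod 2)) = {0, 1} := by decide
  rw [huniv, Finset.sum_pair (by decide : (0 : ZMod 2) ≠ 1)]

lemma zmod2_eq_one : ∀ x : ZMod 2, x ≠ 0 → x = 1 := by decide

lemma char_sum {ι : Type*} [Fintype ι] [DecidableEq ι] (w : ι → ZMod 2) (z : ℝ) :
    ∑ y : ι → ZMod 2, e (∑ q, w q * y q) * z ^ hammingNorm y
      = (1 - z) ^ hammingNorm w * (1 + z) ^ (Fintype.card ι - hammingNorm w) := by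
  classical
  have h0 : ∀ y : ι → ZMod 2, (z ^ hammingNorm y : ℝ) = ∏ q, if y q ≠ 0 then z else 1 := by
    intro y
    rw [Finset.prod_ite, Finset.prod_const, Finset.prod_const_one, mul_one]
    congr 1
  have h1 : ∀ y : ι → ZMod 2, e (∑ q, w q * y q) * z ^ hammingNorm y
      = ∏ q, (e (w q * y q) * if y q ≠ 0 then z else 1) := by
    intro y
    rw [Finset.prod_mul_distrib, ← e_sum, ← h0]
  have h2 := Finset.prod_univ_sum (fun _ : ι => (Finset.univ : Finset (ZMod 2)))
    (fun q s => e (w q * s) * if s ≠ 0 then z else 1)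
  rw [Fintype.piFinset_univ] at h2
  calc ∑ y : ι → ZMod 2, e (∑ q, w q * y q) * z ^ hammingNorm y
      = ∑ y : ι → ZMod 2, ∏ q, (e (w q * y q) * if y q ≠ 0 then z else 1) :=
        Finset.sum_congr rfl fun y _ => h1 y
    _ = ∏ q, ∑ s : ZMod 2, (e (w q * s) * if s ≠ 0 then z else 1) := h2.symm
    _ = ∏ q, (1 + e (w q) * z) := by
        refine Finset.prod_congr rfl fun q _ => ?_
        rw [sum_zmod2 (fun s => e (w q * s) * if s ≠ 0 then z else 1)]
        simp [e_zero]
    _ = (1 - z) ^ hammingNorm w * (1 + z) ^ (Fintype.card ι - hammingNorm w) := by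
        rw [← Finset.prod_filter_mul_prod_filter_not Finset.univ (fun q => w q ≠ 0)]
        have hc1 : ∀ q ∈ Finset.univ.filter (fun q => w q ≠ 0), (1 + e (w q) * z) = 1 - z := by
          intro q hq
          rw [zmod2_eq_one _ (Finset.mem_filter.mp hq).2,
            show e 1 = -1 from by norm_num [e]]
          ring
        have hc2 : ∀ q ∈ Finset.univ.filter (fun q => ¬ w q ≠ 0), (1 + e (w q) * z) = 1 + z := by
          intro q hq
          have := (Finset.mem_filter.mp hq).2
          rw [not_not.mp this, e_zero, one_mul]
        rw [Finset.prod_congr rfl hc1, Finset.prod_congr rfl hc2,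
          Finset.prod_const, Finset.prod_const]
        have hcard1 : (Finset.univ.filter (fun q => w q ≠ 0)).card = hammingNorm w := by
          simp [hammingNorm]
        have hcard2 : (Finset.univ.filter (fun q => ¬ w q ≠ 0)).card
            = Fintype.card ι - hammingNorm w := by
          have := Finset.card_filter_add_card_filter_not
            (s := (Finset.univ : Finset ι)) (p := fun q => w q ≠ 0)
          rw [← hcard1]
          simp only [Finset.card_univ] at this ⊢
          omega
        rw [hcard1, hcard2]


lemma local_id [Fintype (Rkm k m)]
    (hB : ∀ p : Fin k × Fin m, B p = Rkm.u k m ^ (p.1 : ℕ) * Rkm.v k m ^ (p.2 : ℕ))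
    (hk : 1 ≤ k) (hm : 1 ≤ m) (z : ℝ) (a : Rkm k m) :
    ∑ b : Rkm k m, e (Tl B (a * b)) * z ^ hammingNorm (fun q : Fin m × Fin k => psiq B q b)
      = (1 - z) ^ hammingNorm (fun q : Fin m × Fin k => psiq B q a)
        * (1 + z) ^ (k * m - hammingNorm (fun q : Fin m × Fin k => psiq B q a)) := by
  classical
  have hbij := psi_bij B hB hk hm
  have hcard : Fintype.card (Fin m × Fin k) = k * m := by
    simp [Fintype.card_prod, Nat.mul_comm]
  calc ∑ b : Rkm k m, e (Tl B (a * b)) * z ^ hammingNorm (fun q : Fin m × Fin k => psiq B q b)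
      = ∑ y : Fin m × Fin k → ZMod 2,
          e (∑ q, psiq B q a * y q) * z ^ hammingNorm y := by
        refine Fintype.sum_bijective _ hbij _ _ fun b => ?_
        rw [pairing B hB]
    _ = (1 - z) ^ hammingNorm (fun q : Fin m × Fin k => psiq B q a)
        * (1 + z) ^ (Fintype.card (Fin m × Fin k)
            - hammingNorm (fun q : Fin m × Fin k => psiq B q a)) :=
        char_sum _ z
    _ = _ := by rw [hcard]

open Classical in
lemma orth [Fintype (Rkm k m)] {n : ℕ}
    (hB : ∀ p : Fin k × Fin m, B p = Rkm.u k m ^ (p.1 : ℕ) * Rkm.v k m ^ (p.2 : ℕ))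
    (hk : 1 ≤ k) (hm : 1 ≤ m)
    (C : Submodule (Rkm k m) (Fin n → Rkm k m)) (b : Fin n → Rkm k m) :
    ∑ a ∈ (Set.toFinite (C : Set (Fin n → Rkm k m))).toFinset, e (Tl B (∑ i, a i * b i))
      = if (∀ a ∈ C, ∑ i, a i * b i = 0)
          then ((Set.toFinite (C : Set (Fin n → Rkm k m))).toFinset.card : ℝ) else 0 := by
  classical
  set CF := (Set.toFinite (C : Set (Fin n → Rkm k m))).toFinset with hCF
  have hmemCF : ∀ a, a ∈ CF ↔ a ∈ C := by
    intro a; rw [hCF, Set.Finite.mem_toFinset, SetLike.mem_coe]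
  by_cases hb : ∀ a ∈ C, ∑ i, a i * b i = 0
  · rw [if_pos hb]
    have h1 : ∀ a ∈ CF, e (Tl B (∑ i, a i * b i)) = 1 := by
      intro a ha
      rw [hb a ((hmemCF a).mp ha), map_zero, e_zero]
    rw [Finset.sum_congr rfl h1, Finset.sum_const, nsmul_eq_mul, mul_one]
  · rw [if_neg hb]
    push_neg at hb
    obtain ⟨a0, ha0C, ha0⟩ := hb
    obtain ⟨r, hr⟩ := nondeg B hB hk hm _ ha0
    set a1 : Fin n → Rkm k m := r • a0 with ha1def
    have ha1C : a1 ∈ C := C.smul_mem r ha0C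
    have hTa1 : Tl B (∑ i, a1 i * b i) ≠ 0 := by
      have heq : ∑ i, a1 i * b i = (∑ i, a0 i * b i) * r := by
        rw [Finset.sum_mul]
        refine Finset.sum_congr rfl fun i _ => ?_
        rw [ha1def]
        simp only [Pi.smul_apply, smul_eq_mul]
        ring
      rw [heq]
      exact hr
    have hsplit : ∀ a : Fin n → Rkm k m,
        e (Tl B (∑ i, (a1 + a) i * b i))
          = e (Tl B (∑ i, a1 i * b i)) * e (Tl B (∑ i, a i * b i)) := by
      intro a
      rw [← e_add, ← map_add, ← Finset.sum_add_distrib]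
      congr 2
      refine Finset.sum_congr rfl fun i _ => ?_
      simp only [Pi.add_apply]
      ring
    have he1 : e (Tl B (∑ i, a1 i * b i)) = -1 := by
      rw [zmod2_eq_one _ hTa1]
      norm_num [e]
    have hshift : ∑ a ∈ CF, e (Tl B (∑ i, a i * b i))
        = ∑ a ∈ CF, e (Tl B (∑ i, (a1 + a) i * b i)) := by
      have hchar : a1 + a1 = 0 := by
        rw [← two_smul (ZMod 2) a1, show (2 : ZMod 2) = 0 from by decide, zero_smul]
      refine Finset.sum_nbij' (fun a => a1 + a) (fun a => a - a1) ?_ ?_ ?_ ?_ ?_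
      · intro a ha
        rw [hmemCF] at ha ⊢
        exact C.add_mem ha1C ha
      · intro a ha
        rw [hmemCF] at ha ⊢
        exact C.sub_mem ha ha1C
      · intro a _; ring
      · intro a _; ring
      · intro a _
        rw [show a1 + (a1 + a) = a from by rw [← add_assoc, hchar, zero_add]]
    have hneg : ∑ a ∈ CF, e (Tl B (∑ i, a i * b i))
        = - ∑ a ∈ CF, e (Tl B (∑ i, a i * b i)) := by
      conv_lhs => rw [hshift]
      rw [Finset.sum_congr rfl fun a _ => hsplit a]
      rw [Finset.sum_congr rfl fun a _ => by rw [he1]]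
      rw [← Finset.sum_neg_distrib]
      exact Finset.sum_congr rfl fun a _ => by ring
    linarith


lemma double_sum_eq (x : Fin k × Fin m → ZMod 2) (q1 : Fin m) (q2 : Fin k) :
    ∑ j ∈ grayInterval m q1, ∑ i ∈ grayInterval k q2, x (i, j)
      = ∑ p : Fin k × Fin m, fmat k m p (q1, q2) * x p := by
  classical
  have h1 : grayInterval k q2 ×ˢ grayInterval m q1
      = Finset.univ.filter (fun p : Fin k × Fin m =>
          p.2 ∈ grayInterval m q1 ∧ p.1 ∈ grayInterval k q2) := by
    ext p
    simp [Finset.mem_product, and_comm]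
  calc ∑ j ∈ grayInterval m q1, ∑ i ∈ grayInterval k q2, x (i, j)
      = ∑ i ∈ grayInterval k q2, ∑ j ∈ grayInterval m q1, x (i, j) := Finset.sum_comm
    _ = ∑ p ∈ grayInterval k q2 ×ˢ grayInterval m q1, x p :=
        (Finset.sum_product _ _ _).symm
    _ = ∑ p ∈ Finset.univ.filter (fun p : Fin k × Fin m =>
          p.2 ∈ grayInterval m q1 ∧ p.1 ∈ grayInterval k q2), x p := by rw [h1]
    _ = ∑ p : Fin k × Fin m, if p.2 ∈ grayInterval m q1 ∧ p.1 ∈ grayInterval k q2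
          then x p else 0 := Finset.sum_filter _ _
    _ = ∑ p : Fin k × Fin m, fmat k m p (q1, q2) * x p := by
        refine Finset.sum_congr rfl fun p _ => ?_
        simp only [fmat]
        rw [boole_mul]

end MacAux

open MacAux

/-- MacWilliams identity for the Lee weight enumerators of a linear code over `R_{k,m}` and
its dual: `|C| · Lee_{C^⊥}(z) = Σ_{c ∈ C} (1-z)^{w_L(c)} (1+z)^{kmn - w_L(c)}`, where the Lee
weight `w_L(c) = w_H(φ_{km}(c))` is the Hamming weight of the Gray image. -/
theorem Rkm_macwilliams_lee (k m n : ℕ) (hk : 1 ≤ k) (hm : 1 ≤ m) (hn : 1 ≤ n)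
    (B : Module.Basis (Fin k × Fin m) (ZMod 2) (Rkm k m))
    (hB : ∀ p : Fin k × Fin m, B p = Rkm.u k m ^ (p.1 : ℕ) * Rkm.v k m ^ (p.2 : ℕ))
    (φ : (Fin n → Rkm k m) → (Fin m × Fin k × Fin n → ZMod 2))
    (hφ : ∀ a : Fin n → Rkm k m, ∀ q : Fin m × Fin k × Fin n,
      φ a q = ∑ j ∈ grayInterval m q.1, ∑ i ∈ grayInterval k q.2.1, B.repr (a q.2.2) (i, j))
    (wL : (Fin n → Rkm k m) → ℕ) (hwL : ∀ c : Fin n → Rkm k m, wL c = hammingNorm (φ c))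
    (C : Submodule (Rkm k m) (Fin n → Rkm k m)) (z : ℝ) :
    (Nat.card C : ℝ) *
      ∑ᶠ b ∈ {b : Fin n → Rkm k m | ∀ a ∈ C, ∑ i, a i * b i = 0}, z ^ wL b =
    ∑ᶠ c ∈ (C : Set (Fin n → Rkm k m)),
      (1 - z) ^ wL c * (1 + z) ^ (k * m * n - wL c) := by
  classical
  letI : Fintype (Rkm k m) := Module.fintypeOfFintype B
  have hphi : ∀ c : Fin n → Rkm k m, ∀ q : Fin m × Fin k × Fin n,
      φ c q = psiq B (q.1, q.2.1) (c q.2.2) := by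
    intro c q
    rw [hφ c q, psiq_apply]
    exact double_sum_eq _ _ _
  set w1 : Rkm k m → ℕ :=
    fun r => hammingNorm (fun q : Fin m × Fin k => psiq B q r) with hw1
  have hw1le : ∀ r, w1 r ≤ k * m := by
    intro r
    have h := Finset.card_filter_le (Finset.univ : Finset (Fin m × Fin k))
      (fun q => psiq B q r ≠ 0)
    simp only [Finset.card_univ, Fintype.card_prod, Fintype.card_fin] at h
    calc w1 r ≤ m * k := h
      _ = k * m := Nat.mul_comm m k
  have hwsum : ∀ c : Fin n → Rkm k m, wL c = ∑ i : Fin n, w1 (c i) := by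
    intro c
    rw [hwL c]
    calc hammingNorm (φ c)
        = ∑ q : Fin m × Fin k × Fin n, if φ c q ≠ 0 then 1 else 0 :=
          Finset.card_filter _ _
      _ = ∑ q1 : Fin m, ∑ q2 : Fin k, ∑ q3 : Fin n,
            (if psiq B (q1, q2) (c q3) ≠ 0 then 1 else 0) := by
          rw [Fintype.sum_prod_type]
          refine Finset.sum_congr rfl fun q1 _ => ?_
          rw [Fintype.sum_prod_type]
          refine Finset.sum_congr rfl fun q2 _ => Finset.sum_congr rfl fun q3 _ => ?_
          rw [hphi c (q1, q2, q3)]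
      _ = ∑ q3 : Fin n, ∑ q1 : Fin m, ∑ q2 : Fin k,
            (if psiq B (q1, q2) (c q3) ≠ 0 then 1 else 0) := by
          rw [Finset.sum_congr rfl fun (q1 : Fin m) (_ : q1 ∈ Finset.univ) =>
            (Finset.sum_comm (s := Finset.univ) (t := Finset.univ)
              (f := fun (q2 : Fin k) (q3 : Fin n) =>
                if psiq B (q1, q2) (c q3) ≠ 0 then 1 else 0))]
          exact Finset.sum_comm
      _ = ∑ i : Fin n, w1 (c i) := by
          refine Finset.sum_congr rfl fun q3 _ => ?_
          simp only [hw1]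
          rw [show (hammingNorm fun q : Fin m × Fin k => psiq B q (c q3))
              = ∑ q : Fin m × Fin k, if psiq B q (c q3) ≠ 0 then 1 else 0 from
            Finset.card_filter _ _]
          rw [Fintype.sum_prod_type]
  have hstep2 : ∀ c : Fin n → Rkm k m,
      (1 - z) ^ wL c * (1 + z) ^ (k * m * n - wL c)
        = ∑ b : Fin n → Rkm k m, e (Tl B (∑ i, c i * b i)) * z ^ wL b := by
    intro c
    have hexp : k * m * n - (∑ i, w1 (c i)) = ∑ i : Fin n, (k * m - w1 (c i)) := by
      have h1 : (∑ i : Fin n, (k * m - w1 (c i))) + ∑ i : Fin n, w1 (c i) = k * m * n := by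
        rw [← Finset.sum_add_distrib]
        rw [Finset.sum_congr rfl fun i _ => Nat.sub_add_cancel (hw1le (c i))]
        rw [Finset.sum_const, Finset.card_univ, Fintype.card_fin, smul_eq_mul]
        ring
      omega
    calc (1 - z) ^ wL c * (1 + z) ^ (k * m * n - wL c)
        = ∏ i : Fin n, ((1 - z) ^ w1 (c i) * (1 + z) ^ (k * m - w1 (c i))) := by
          rw [hwsum c, hexp, Finset.prod_mul_distrib,
            Finset.prod_pow_eq_pow_sum, Finset.prod_pow_eq_pow_sum]
      _ = ∏ i : Fin n, ∑ b : Rkm k m, e (Tl B (c i * b))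
            * z ^ hammingNorm (fun q : Fin m × Fin k => psiq B q b) := by
          refine Finset.prod_congr rfl fun i _ => ?_
          exact (local_id B hB hk hm z (c i)).symm
      _ = ∑ b : Fin n → Rkm k m, ∏ i : Fin n, (e (Tl B (c i * b i))
            * z ^ hammingNorm (fun q : Fin m × Fin k => psiq B q (b i))) := by
          rw [Finset.prod_univ_sum]
          rw [Fintype.piFinset_univ]
      _ = ∑ b : Fin n → Rkm k m, e (Tl B (∑ i, c i * b i)) * z ^ wL b := by
          refine Finset.sum_congr rfl fun b _ => ?_
          rw [Finset.prod_mul_distrib, ← e_sum, ← map_sum, hwsum b,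
            ← Finset.prod_pow_eq_pow_sum]
  set D : Set (Fin n → Rkm k m) := {b | ∀ a ∈ C, ∑ i, a i * b i = 0} with hD
  have hDfin : D.Finite := Set.toFinite _
  have hCfin : (C : Set (Fin n → Rkm k m)).Finite := Set.toFinite _
  rw [finsum_mem_eq_finite_toFinset_sum _ hDfin, finsum_mem_eq_finite_toFinset_sum _ hCfin]
  rw [Finset.sum_congr rfl fun c _ => hstep2 c]
  rw [Finset.sum_comm]
  have horth : ∀ b : Fin n → Rkm k m,
      ∑ c ∈ hCfin.toFinset, e (Tl B (∑ i, c i * b i)) * z ^ wL b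
        = (if (∀ a ∈ C, ∑ i, a i * b i = 0) then (hCfin.toFinset.card : ℝ) else 0)
            * z ^ wL b := by
    intro b
    rw [← Finset.sum_mul]
    congr 1
    exact orth B hB hk hm C b
  rw [Finset.sum_congr rfl fun b _ => horth b]
  have hcardC : (Nat.card C : ℝ) = (hCfin.toFinset.card : ℝ) := by
    have h1 : Nat.card C = (C : Set (Fin n → Rkm k m)).ncard :=
      Nat.card_coe_set_eq _
    rw [h1, Set.ncard_eq_toFinset_card _ hCfin]
  rw [hcardC, Finset.mul_sum]
  have hfil : hDfin.toFinset
      = Finset.univ.filter (fun b : Fin n → Rkm k m => ∀ a ∈ C, ∑ i, a i * b i = 0) := by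
    ext b
    simp only [Set.Finite.mem_toFinset, Finset.mem_filter, Finset.mem_univ, true_and, hD]
    rfl
  rw [hfil]
  rw [Finset.sum_filter]
  refine (Finset.sum_congr rfl fun b _ => ?_).symm
  split_ifs with h
  · ring
  · ring
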